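/- (Yordanov–Zhang pointwise bound) For n ≥ 2 there exists a constant C = C(n) > 0 such that φ₁(x) ≤ C (1+|x|)^{−(n−1)/2} e^{|x|} for all x ∈ ℝⁿ. -/

import Mathlib

open MeasureTheory Real Set
open scoped Pointwise ENNReal
set_option maxHeartbeats 1000000

noncomputable section

/-- The Laplacian, as the sum of pure second derivatives in the coordinate directions. -/
def lap {n : ℕ} (u : EuclideanSpace ℝ (Fin n) → ℝ) (x : EuclideanSpace ℝ (Fin n)) : ℝ :=
  ∑ i : Fin n, iteratedDeriv 2 (fun s : ℝ => u (x + s • EuclideanSpace.single i (1 : ℝ))) 0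

/-- The Yordanov–Zhang function `φ₁`:
`φ₁(x) = ∫_{S^{n-1}} e^{x·ω} dS_ω` for `n ≥ 2`, and `φ₁(x) = e^x + e^{-x}` for `n = 1`. -/
def phi1 (n : ℕ) (x : EuclideanSpace ℝ (Fin n)) : ℝ :=
  if n = 1 then Real.exp (∑ i, x i) + Real.exp (-∑ i, x i)
  else ∫ ω : Metric.sphere (0 : EuclideanSpace ℝ (Fin n)) 1,
      Real.exp ((inner ℝ x (ω : EuclideanSpace ℝ (Fin n)) : ℝ))
    ∂((volume : Measure (EuclideanSpace ℝ (Fin n))).toSphere)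

/-- The Yordanov–Zhang test function `ψ(x,t) = e^{-t} φ₁(x)`. -/
def psi (n : ℕ) (x : EuclideanSpace ℝ (Fin n)) (t : ℝ) : ℝ :=
  Real.exp (-t) * phi1 n x

variable {n : ℕ}

lemma cap_subset_box (hn : 2 ≤ n) (e : EuclideanSpace ℝ (Fin n)) (he : ‖e‖ = 1)
    {δ : ℝ} (hδ0 : 0 < δ) (hδ1 : δ ≤ 1)
    (i0 : Fin n) (b : OrthonormalBasis (Fin n) ℝ (EuclideanSpace ℝ (Fin n))) (hb : b i0 = e) :
    (Ioo (0:ℝ) 1 • ((↑) '' {ω : Metric.sphere (0 : EuclideanSpace ℝ (Fin n)) 1 |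
        1 - δ ≤ (inner ℝ e (ω : EuclideanSpace ℝ (Fin n)) : ℝ)}) : Set (EuclideanSpace ℝ (Fin n)))
      ⊆ (fun x => (b.repr x : Fin n → ℝ)) ⁻¹'
        (univ.pi fun i : Fin n =>
          if i = i0 then Icc (0:ℝ) 1 else Icc (-Real.sqrt (2*δ)) (Real.sqrt (2*δ))) := by
  rintro x hx
  rw [Set.mem_smul] at hx
  obtain ⟨r, hr, ω, hω, rfl⟩ := hx
  obtain ⟨hr0, hr1⟩ := hr
  obtain ⟨w, hw, rfl⟩ := hω
  have hwn : ‖(w : EuclideanSpace ℝ (Fin n))‖ = 1 := by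
    simpa using mem_sphere_zero_iff_norm.mp w.2
  obtain ⟨u, hu⟩ : ∃ u : ℝ, u = inner ℝ e (w : EuclideanSpace ℝ (Fin n)) := ⟨_, rfl⟩
  have hu1 : u ≤ 1 := by
    calc u ≤ ‖e‖ * ‖(w : EuclideanSpace ℝ (Fin n))‖ := hu ▸ real_inner_le_norm _ _
    _ = 1 := by rw [he, hwn]; ring
  have hul : 1 - δ ≤ u := hu ▸ hw
  have hu0 : 0 ≤ u := le_trans (by linarith) hul
  have hnorm : ‖r • (w : EuclideanSpace ℝ (Fin n))‖ = r := by
    rw [norm_smul, hwn, Real.norm_eq_abs, abs_of_pos hr0, mul_one]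
  obtain ⟨y, hydef⟩ : ∃ y : EuclideanSpace ℝ (Fin n),
      y = b.repr (r • (w : EuclideanSpace ℝ (Fin n))) := ⟨_, rfl⟩
  have hy : ∀ i, y i = inner ℝ (b i) (r • (w : EuclideanSpace ℝ (Fin n))) := fun i => by
    rw [hydef, b.repr_apply_apply]
  have hy0 : y i0 = r * u := by rw [hy i0, hb, real_inner_smul_right, ← hu]
  intro i _
  show (b.repr (r • (w : EuclideanSpace ℝ (Fin n))) : Fin n → ℝ) i ∈ _
  rw [← hydef]
  by_cases hi : i = i0
  · subst hi
    simp only [if_pos rfl, mem_Icc, hy0]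
    constructor
    · positivity
    · nlinarith
  · simp only [if_neg hi, mem_Icc, ← abs_le]
    have hsum : ∑ j, (y j)^2 = r^2 := by
      have h1 : ‖y‖ = r := by rw [hydef]; rw [b.repr.norm_map, hnorm]
      have h2 : ‖y‖ = Real.sqrt (∑ j, (y j)^2) := by
        rw [EuclideanSpace.norm_eq]
        congr 1
        exact Finset.sum_congr rfl fun j _ => by rw [Real.norm_eq_abs, sq_abs]
      have := h2 ▸ h1
      have hnn : (0:ℝ) ≤ ∑ j : Fin n, (y j)^2 :=
        Finset.sum_nonneg fun j _ => sq_nonneg (y j)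
      nlinarith [Real.sq_sqrt hnn, Real.sqrt_nonneg (∑ j : Fin n, (y j)^2)]
    have hpair : (y i0)^2 + (y i)^2 ≤ ∑ j, (y j)^2 := by
      have : ({i0, i} : Finset (Fin n)) ⊆ Finset.univ := Finset.subset_univ _
      calc (y i0)^2 + (y i)^2 = ∑ j ∈ ({i0, i} : Finset (Fin n)), (y j)^2 := by
            rw [Finset.sum_pair (Ne.symm hi)]
      _ ≤ ∑ j, (y j)^2 := Finset.sum_le_sum_of_subset_of_nonneg this
            (fun j _ _ => sq_nonneg _)
    have hyi : (y i)^2 ≤ 2*δ := by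
      have hy0' : y i0 = r * u := hy0
      have hu2 : u^2 ≤ 1 := by nlinarith
      have hr2 : r^2 ≤ 1 := by nlinarith
      have h1 : (1-δ)^2 ≤ u^2 := by nlinarith
      have hp2 : (y i0)^2 + (y i)^2 ≤ r^2 := by rw [hsum] at hpair; exact hpair
      have hyi2 : (y i)^2 ≤ r^2 - (r*u)^2 := by rw [← hy0']; linarith
      have key : r^2 - (r*u)^2 ≤ 1 - u^2 := by
        nlinarith [mul_nonneg (by linarith : (0:ℝ) ≤ 1 - r^2) (by linarith : (0:ℝ) ≤ 1 - u^2)]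
      have hfin : 1 - u^2 ≤ 2*δ := by nlinarith [sq_nonneg δ]
      linarith
    calc |y i| = Real.sqrt ((y i)^2) := (Real.sqrt_sq_eq_abs _).symm
    _ ≤ Real.sqrt (2*δ) := Real.sqrt_le_sqrt hyi

lemma volume_box (hn : 2 ≤ n) (i0 : Fin n) {a : ℝ} (ha : 0 ≤ a) :
    (volume : Measure (EuclideanSpace ℝ (Fin n)))
      ((fun x => (((MeasurableEquiv.toLp 2 (Fin n → ℝ)).symm) x : Fin n → ℝ)) ⁻¹'
        (univ.pi fun i : Fin n => if i = i0 then Icc (0:ℝ) 1 else Icc (-a) a))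
      = ENNReal.ofReal ((2*a)^(n-1)) := by
  have hms : MeasurableSet (univ.pi fun i : Fin n =>
      if i = i0 then Icc (0:ℝ) 1 else Icc (-a) a) :=
    MeasurableSet.univ_pi fun i => by
      by_cases hi : i = i0 <;> simp [hi, measurableSet_Icc]
  rw [(EuclideanSpace.volume_preserving_symm_measurableEquiv_toLp (Fin n)).measure_preimage
    hms.nullMeasurableSet]
  rw [volume_pi_pi]
  have : ∀ i : Fin n, (volume (if i = i0 then Icc (0:ℝ) 1 else Icc (-a) a))
      = if i = i0 then 1 else ENNReal.ofReal (2*a) := by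
    intro i
    by_cases hi : i = i0 <;> simp [hi, Real.volume_Icc]
    ring_nf
    rw [ENNReal.ofReal_mul ha]
    simp
  rw [Finset.prod_congr rfl fun i _ => this i]
  rw [← Finset.mul_prod_erase Finset.univ _ (Finset.mem_univ i0), if_pos rfl, one_mul]
  rw [Finset.prod_eq_pow_card (fun i hi => if_neg (Finset.ne_of_mem_erase hi))]
  rw [Finset.card_erase_of_mem (Finset.mem_univ i0), Finset.card_univ, Fintype.card_fin]
  rw [← ENNReal.ofReal_pow (by linarith)]

lemma cap_measure_le (hn : 2 ≤ n) (e : EuclideanSpace ℝ (Fin n)) (he : ‖e‖ = 1)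
    {δ : ℝ} (hδ0 : 0 < δ) (hδ1 : δ ≤ 1) :
    (volume : Measure (EuclideanSpace ℝ (Fin n))).toSphere
        {ω : Metric.sphere (0 : EuclideanSpace ℝ (Fin n)) 1 |
          1 - δ ≤ (inner ℝ e (ω : EuclideanSpace ℝ (Fin n)) : ℝ)}
      ≤ ENNReal.ofReal ((n * (2*Real.sqrt 2)^(n-1)) * δ ^ (((n:ℝ)-1)/2)) := by
  have i0 : Fin n := ⟨0, by omega⟩
  -- orthonormal basis with b i0 = e
  have hcard : Module.finrank ℝ (EuclideanSpace ℝ (Fin n)) = Fintype.card (Fin n) := by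
    simp [finrank_euclideanSpace]
  have horth : Orthonormal ℝ (({i0} : Set (Fin n)).restrict (fun _ : Fin n => e)) := by
    constructor
    · intro i; simpa [he]
    · intro i j hij
      exact absurd (Subtype.ext (by
        have := i.2; have := j.2
        simp only [Set.mem_singleton_iff] at *
        rw [this]; exact i.2)) hij
  obtain ⟨b, hb⟩ := horth.exists_orthonormalBasis_extension_of_card_eq hcard
  have hb0 : b i0 = e := hb i0 rfl
  -- measurability of the cap
  have hcapm : MeasurableSet {ω : Metric.sphere (0 : EuclideanSpace ℝ (Fin n)) 1 |
      1 - δ ≤ (inner ℝ e (ω : EuclideanSpace ℝ (Fin n)) : ℝ)} := by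
    have : Continuous fun ω : Metric.sphere (0 : EuclideanSpace ℝ (Fin n)) 1 =>
        (inner ℝ e (ω : EuclideanSpace ℝ (Fin n)) : ℝ) :=
      Continuous.inner continuous_const continuous_subtype_val
    exact (isClosed_le continuous_const this).measurableSet
  rw [Measure.toSphere_apply' _ hcapm]
  have hsub := cap_subset_box hn e he hδ0 hδ1 i0 b hb0
  have hmono := measure_mono (μ := (volume : Measure (EuclideanSpace ℝ (Fin n)))) hsub
  have hpre : (volume : Measure (EuclideanSpace ℝ (Fin n)))
      ((fun x => (b.repr x : Fin n → ℝ)) ⁻¹'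
        (univ.pi fun i : Fin n =>
          if i = i0 then Icc (0:ℝ) 1 else Icc (-Real.sqrt (2*δ)) (Real.sqrt (2*δ))))
      = ENNReal.ofReal ((2*Real.sqrt (2*δ))^(n-1)) := by
    have hcomp : (fun x : EuclideanSpace ℝ (Fin n) => (b.repr x : Fin n → ℝ))
        = (fun y : EuclideanSpace ℝ (Fin n) =>
            (((MeasurableEquiv.toLp 2 (Fin n → ℝ)).symm) y : Fin n → ℝ)) ∘ ⇑b.repr := rfl
    rw [hcomp, Set.preimage_comp]
    rw [b.measurePreserving_repr.measure_preimage]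
    · exact volume_box hn i0 (Real.sqrt_nonneg _)
    · have hms : MeasurableSet (univ.pi fun i : Fin n =>
          if i = i0 then Icc (0:ℝ) 1 else Icc (-Real.sqrt (2*δ)) (Real.sqrt (2*δ))) :=
        MeasurableSet.univ_pi fun i => by
          by_cases hi : i = i0 <;> simp [hi, measurableSet_Icc]
      exact (((MeasurableEquiv.toLp 2 (Fin n → ℝ)).symm).measurable hms).nullMeasurableSet
  have hdim : Module.finrank ℝ (EuclideanSpace ℝ (Fin n)) = n := by
    simp [finrank_euclideanSpace]
  rw [hdim]
  refine le_trans (mul_le_mul_right (hpre ▸ hmono) (n : ℝ≥0∞)) (le_of_eq ?_)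
  · 
      rw [← ENNReal.ofReal_natCast n, ← ENNReal.ofReal_mul (Nat.cast_nonneg n)]
      congr 1
      have hs : Real.sqrt (2*δ) = Real.sqrt 2 * Real.sqrt δ := Real.sqrt_mul (by norm_num) δ
      have hp : (Real.sqrt δ)^(n-1) = δ ^ (((n:ℝ)-1)/2) := by
        rw [← Real.rpow_natCast (Real.sqrt δ) (n-1), Real.sqrt_eq_rpow,
          ← Real.rpow_mul hδ0.le]
        congr 1
        rw [Nat.cast_sub (by omega : 1 ≤ n)]
        push_cast
        ring
      rw [hs]
      rw [show (2 * (Real.sqrt 2 * Real.sqrt δ)) = (2 * Real.sqrt 2) * Real.sqrt δ by ring]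
      rw [mul_pow, hp]
      ring

lemma cap_measure_le' (hn : 2 ≤ n) (e : EuclideanSpace ℝ (Fin n)) (he : ‖e‖ = 1)
    {δ : ℝ} (hδ0 : 0 < δ) :
    (volume : Measure (EuclideanSpace ℝ (Fin n))).toSphere
        {ω : Metric.sphere (0 : EuclideanSpace ℝ (Fin n)) 1 |
          1 - δ ≤ (inner ℝ e (ω : EuclideanSpace ℝ (Fin n)) : ℝ)}
      ≤ ENNReal.ofReal (((n * (2*Real.sqrt 2)^(n-1))
          + ((volume : Measure (EuclideanSpace ℝ (Fin n))).toSphere univ).toReal)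
          * δ ^ (((n:ℝ)-1)/2)) := by
  set M : ℝ := ((volume : Measure (EuclideanSpace ℝ (Fin n))).toSphere univ).toReal with hM
  have hM0 : 0 ≤ M := ENNReal.toReal_nonneg
  have hC0 : (0:ℝ) ≤ n * (2*Real.sqrt 2)^(n-1) := by positivity
  have hα0 : (0:ℝ) ≤ ((n:ℝ)-1)/2 := by
    have : (2:ℝ) ≤ n := by exact_mod_cast hn
    linarith
  by_cases hδ1 : δ ≤ 1
  · refine le_trans (cap_measure_le hn e he hδ0 hδ1) (ENNReal.ofReal_le_ofReal ?_)
    have : (0:ℝ) ≤ δ ^ (((n:ℝ)-1)/2) := Real.rpow_nonneg hδ0.le _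
    nlinarith
  · push_neg at hδ1
    refine le_trans (measure_mono (subset_univ _)) ?_
    have huniv : (volume : Measure (EuclideanSpace ℝ (Fin n))).toSphere univ
        = ENNReal.ofReal M := by
      rw [hM, ENNReal.ofReal_toReal (measure_ne_top _ _)]
    rw [huniv]
    refine ENNReal.ofReal_le_ofReal ?_
    have h1 : (1:ℝ) ≤ δ ^ (((n:ℝ)-1)/2) := Real.one_le_rpow hδ1.le hα0
    nlinarith

lemma summable_aux (n : ℕ) :
    Summable (fun k : ℕ => ((k:ℝ)+1)^n * Real.exp (-(k:ℝ))) := by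
  have hr0 : (0:ℝ) < Real.exp (-1) := Real.exp_pos _
  have hr1 : ‖Real.exp (-1)‖ < 1 := by
    rw [Real.norm_eq_abs, abs_of_pos hr0]
    exact Real.exp_lt_one_iff.mpr (by norm_num)
  have h := summable_pow_mul_geometric_of_norm_lt_one n hr1
  have h2 : Summable (fun k : ℕ => ((k:ℝ)+1)^n * Real.exp (-1)^(k+1)) := by
    have := (summable_nat_add_iff 1).mpr h
    refine this.congr fun k => ?_
    push_cast
    ring
  have h3 : Summable (fun k : ℕ => ((k:ℝ)+1)^n * Real.exp (-1)^k) := by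
    have := h2.mul_left (Real.exp (-1))⁻¹
    refine this.congr fun k => ?_
    field_simp
    ring
  refine h3.congr fun k => ?_
  congr 1
  rw [← Real.exp_nat_mul]
  congr 1
  ring


/-- Yordanov–Zhang pointwise bound: for `n ≥ 2` there is `C = C(n) > 0` with
`φ₁(x) ≤ C (1+|x|)^{-(n-1)/2} e^{|x|}` for all `x`. -/
theorem phi1_pointwise_bound {n : ℕ} (hn : 2 ≤ n) :
    ∃ C > (0 : ℝ), ∀ x : EuclideanSpace ℝ (Fin n),
      phi1 n x ≤ C * (1 + ‖x‖) ^ (-(((n : ℝ) - 1) / 2)) * Real.exp ‖x‖ := by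
  set σ := (volume : Measure (EuclideanSpace ℝ (Fin n))).toSphere with hσ
  set M : ℝ := (σ univ).toReal with hMdef
  set α : ℝ := ((n:ℝ)-1)/2 with hαdef
  set C2 : ℝ := (n * (2*Real.sqrt 2)^(n-1)) + M with hC2def
  set S : ℝ := ∑' k : ℕ, ((k:ℝ)+1)^n * Real.exp (-(k:ℝ)) with hSdef
  have hM0 : 0 ≤ M := ENNReal.toReal_nonneg
  have hα0 : (0:ℝ) ≤ α := by
    have : (2:ℝ) ≤ n := by exact_mod_cast hn
    rw [hαdef]; linarith
  have hαn : α ≤ (n:ℝ) := by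
    have : (2:ℝ) ≤ n := by exact_mod_cast hn
    rw [hαdef]; linarith
  have hC20 : 0 ≤ C2 := by
    have : (0:ℝ) ≤ n * (2*Real.sqrt 2)^(n-1) := by positivity
    linarith
  have hS0 : 0 ≤ S := tsum_nonneg fun k => by positivity
  have h2α : (0:ℝ) < (2:ℝ) ^ α := Real.rpow_pos_of_pos (by norm_num) α
  set C : ℝ := (C2 * S + M) * (2:ℝ)^α + 1 with hCdef
  have hC0 : 0 < C := by
    have h1 : 0 ≤ (C2*S + M) * (2:ℝ)^α :=
      mul_nonneg (by nlinarith [mul_nonneg hC20 hS0]) h2α.le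
    rw [hCdef]; linarith
  refine ⟨C, hC0, fun x => ?_⟩
  rw [phi1, if_neg (by omega)]
  set r : ℝ := ‖x‖ with hrdef
  have hr0 : 0 ≤ r := norm_nonneg x
  have hRHS0 : 0 ≤ C * (1 + r) ^ (-α) * Real.exp r := by positivity
  -- bridge from Bochner integral to lintegral
  have hbridge : ∀ B : ℝ, 0 ≤ B →
      (∫⁻ ω : Metric.sphere (0 : EuclideanSpace ℝ (Fin n)) 1,
        ENNReal.ofReal (Real.exp ((inner ℝ x (ω : EuclideanSpace ℝ (Fin n)) : ℝ))) ∂σ)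
        ≤ ENNReal.ofReal B →
      (∫ ω : Metric.sphere (0 : EuclideanSpace ℝ (Fin n)) 1,
        Real.exp ((inner ℝ x (ω : EuclideanSpace ℝ (Fin n)) : ℝ)) ∂σ) ≤ B := by
    intro B hB h
    by_cases hi : Integrable (fun ω : Metric.sphere (0 : EuclideanSpace ℝ (Fin n)) 1 =>
        Real.exp ((inner ℝ x (ω : EuclideanSpace ℝ (Fin n)) : ℝ))) σ
    · rw [integral_eq_lintegral_of_nonneg_ae
        (Filter.Eventually.of_forall fun ω => (Real.exp_pos _).le) hi.aestronglyMeasurable]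
      calc (∫⁻ ω, ENNReal.ofReal (Real.exp ((inner ℝ x (ω : EuclideanSpace ℝ (Fin n)) : ℝ))) ∂σ).toReal
          ≤ (ENNReal.ofReal B).toReal := ENNReal.toReal_mono ENNReal.ofReal_ne_top h
      _ = B := ENNReal.toReal_ofReal hB
    · rw [integral_undef hi]; exact hB
  refine hbridge _ hRHS0 ?_
  by_cases hr1 : r ≤ 1
  · -- small radius case
    have hpt : ∀ ω : Metric.sphere (0 : EuclideanSpace ℝ (Fin n)) 1,
        ENNReal.ofReal (Real.exp ((inner ℝ x (ω : EuclideanSpace ℝ (Fin n)) : ℝ)))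
          ≤ ENNReal.ofReal (Real.exp r) := by
      intro ω
      refine ENNReal.ofReal_le_ofReal (Real.exp_le_exp.mpr ?_)
      have hωn : ‖(ω : EuclideanSpace ℝ (Fin n))‖ = 1 := by
        simpa using mem_sphere_zero_iff_norm.mp ω.2
      calc (inner ℝ x (ω : EuclideanSpace ℝ (Fin n)) : ℝ)
          ≤ ‖x‖ * ‖(ω : EuclideanSpace ℝ (Fin n))‖ := real_inner_le_norm _ _
      _ = r := by rw [hωn, ← hrdef, mul_one]
    calc (∫⁻ ω : Metric.sphere (0 : EuclideanSpace ℝ (Fin n)) 1,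
          ENNReal.ofReal (Real.exp ((inner ℝ x (ω : EuclideanSpace ℝ (Fin n)) : ℝ))) ∂σ)
        ≤ ∫⁻ _ : Metric.sphere (0 : EuclideanSpace ℝ (Fin n)) 1,
            ENNReal.ofReal (Real.exp r) ∂σ := lintegral_mono hpt
    _ = ENNReal.ofReal (Real.exp r) * σ univ := lintegral_const _
    _ = ENNReal.ofReal (Real.exp r) * ENNReal.ofReal M := by
        rw [hMdef, ENNReal.ofReal_toReal (measure_ne_top σ univ)]
    _ = ENNReal.ofReal (Real.exp r * M) := (ENNReal.ofReal_mul (Real.exp_pos r).le).symm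
    _ ≤ ENNReal.ofReal (C * (1 + r) ^ (-α) * Real.exp r) := by
        refine ENNReal.ofReal_le_ofReal ?_
        have h1r : (0:ℝ) < 1 + r := by linarith
        have hp1 : (0:ℝ) < (1+r)^α := Real.rpow_pos_of_pos h1r α
        have h12 : (1+r)^α ≤ (2:ℝ)^α := Real.rpow_le_rpow h1r.le (by linarith) hα0
        have hMC : M * (1+r)^α ≤ C := by
          have h1 : M * (1+r)^α ≤ M * (2:ℝ)^α := mul_le_mul_of_nonneg_left h12 hM0
          have h2 : 0 ≤ C2 * S * (2:ℝ)^α := mul_nonneg (mul_nonneg hC20 hS0) h2α.le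
          rw [hCdef]; nlinarith
        have hM' : M ≤ C * ((1+r)^α)⁻¹ := by
          rw [← div_eq_mul_inv, le_div_iff₀ hp1]
          exact hMC
        rw [Real.rpow_neg h1r.le]
        nlinarith [Real.exp_pos r, mul_le_mul_of_nonneg_right hM' (Real.exp_pos r).le]
  · -- large radius case
    push_neg at hr1
    have hrpos : (0:ℝ) < r := by linarith
    set e : EuclideanSpace ℝ (Fin n) := r⁻¹ • x with hedef
    have he : ‖e‖ = 1 := by
      rw [hedef, norm_smul, Real.norm_eq_abs, abs_of_pos (inv_pos.mpr hrpos), ← hrdef]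
      field_simp
    have hxe : ∀ ω : Metric.sphere (0 : EuclideanSpace ℝ (Fin n)) 1,
        (inner ℝ x (ω : EuclideanSpace ℝ (Fin n)) : ℝ)
          = r * (inner ℝ e (ω : EuclideanSpace ℝ (Fin n)) : ℝ) := by
      intro ω
      have hx : x = r • e := by
        rw [hedef, smul_smul, mul_inv_cancel₀ hrpos.ne', one_smul]
      conv_lhs => rw [hx]
      rw [real_inner_smul_left]
    have hcontu : Continuous fun ω : Metric.sphere (0 : EuclideanSpace ℝ (Fin n)) 1 =>
        (inner ℝ e (ω : EuclideanSpace ℝ (Fin n)) : ℝ) :=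
      Continuous.inner continuous_const continuous_subtype_val
    set A : ℕ → Set (Metric.sphere (0 : EuclideanSpace ℝ (Fin n)) 1) := fun k =>
      {ω | (k:ℝ) ≤ r * (1 - (inner ℝ e (ω : EuclideanSpace ℝ (Fin n)) : ℝ)) ∧
        r * (1 - (inner ℝ e (ω : EuclideanSpace ℝ (Fin n)) : ℝ)) < (k:ℝ)+1} with hAdef
    have hA : ∀ k, MeasurableSet (A k) := by
      intro k
      have hm : Measurable fun ω : Metric.sphere (0 : EuclideanSpace ℝ (Fin n)) 1 =>
          r * (1 - (inner ℝ e (ω : EuclideanSpace ℝ (Fin n)) : ℝ)) :=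
        (continuous_const.mul (continuous_const.sub hcontu)).measurable
      exact hm measurableSet_Ico
    have hu1 : ∀ ω : Metric.sphere (0 : EuclideanSpace ℝ (Fin n)) 1,
        (inner ℝ e (ω : EuclideanSpace ℝ (Fin n)) : ℝ) ≤ 1 := by
      intro ω
      have hωn : ‖(ω : EuclideanSpace ℝ (Fin n))‖ = 1 := by
        simpa using mem_sphere_zero_iff_norm.mp ω.2
      calc (inner ℝ e (ω : EuclideanSpace ℝ (Fin n)) : ℝ)
          ≤ ‖e‖ * ‖(ω : EuclideanSpace ℝ (Fin n))‖ := real_inner_le_norm _ _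
      _ = 1 := by rw [he, hωn, mul_one]
    have hpt : ∀ ω : Metric.sphere (0 : EuclideanSpace ℝ (Fin n)) 1,
        ENNReal.ofReal (Real.exp ((inner ℝ x (ω : EuclideanSpace ℝ (Fin n)) : ℝ)))
          ≤ ∑' k : ℕ, (A k).indicator
              (fun _ => ENNReal.ofReal (Real.exp (r - (k:ℝ)))) ω := by
      intro ω
      have ht0 : 0 ≤ r * (1 - (inner ℝ e (ω : EuclideanSpace ℝ (Fin n)) : ℝ)) :=
        mul_nonneg hrpos.le (by linarith [hu1 ω])
      set m : ℕ := ⌊r * (1 - (inner ℝ e (ω : EuclideanSpace ℝ (Fin n)) : ℝ))⌋₊ with hmdef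
      have hm1 : (m:ℝ) ≤ r * (1 - (inner ℝ e (ω : EuclideanSpace ℝ (Fin n)) : ℝ)) :=
        Nat.floor_le ht0
      have hm2 : r * (1 - (inner ℝ e (ω : EuclideanSpace ℝ (Fin n)) : ℝ)) < (m:ℝ)+1 :=
        Nat.lt_floor_add_one _
      have hmem : ω ∈ A m := ⟨hm1, hm2⟩
      have hone : ENNReal.ofReal (Real.exp ((inner ℝ x (ω : EuclideanSpace ℝ (Fin n)) : ℝ)))
          ≤ (A m).indicator (fun _ => ENNReal.ofReal (Real.exp (r - (m:ℝ)))) ω := by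
        rw [Set.indicator_of_mem hmem]
        refine ENNReal.ofReal_le_ofReal (Real.exp_le_exp.mpr ?_)
        rw [hxe ω]
        linarith
      exact hone.trans (ENNReal.le_tsum m)
    have hcap : ∀ k : ℕ, σ (A k) ≤ ENNReal.ofReal (C2 * (((k:ℝ)+1)/r) ^ α) := by
      intro k
      have hsubset : A k ⊆ {ω : Metric.sphere (0 : EuclideanSpace ℝ (Fin n)) 1 |
          1 - ((k:ℝ)+1)/r ≤ (inner ℝ e (ω : EuclideanSpace ℝ (Fin n)) : ℝ)} := by
        intro ω hω
        have h2 := hω.2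
        have : (1 - (inner ℝ e (ω : EuclideanSpace ℝ (Fin n)) : ℝ)) < ((k:ℝ)+1)/r := by
          rw [lt_div_iff₀ hrpos]
          linarith [h2, mul_comm r (1 - (inner ℝ e (ω : EuclideanSpace ℝ (Fin n)) : ℝ))]
        simp only [Set.mem_setOf_eq]
        linarith
      refine le_trans (measure_mono hsubset) ?_
      have hδpos : (0:ℝ) < ((k:ℝ)+1)/r := by positivity
      have := cap_measure_le' hn e he hδpos
      rw [hC2def, hMdef, hσ, hαdef]
      exact this
    have hterm : ∀ k : ℕ, Real.exp (r - (k:ℝ)) * (C2 * (((k:ℝ)+1)/r) ^ α)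
        ≤ (C2 * Real.exp r * r^(-α)) * (((k:ℝ)+1)^n * Real.exp (-(k:ℝ))) := by
      intro k
      have hk1 : (0:ℝ) ≤ (k:ℝ)+1 := by positivity
      have hsplit : Real.exp (r - (k:ℝ)) * (C2 * (((k:ℝ)+1)/r) ^ α)
          = (C2 * Real.exp r * r^(-α)) * (((k:ℝ)+1)^α * Real.exp (-(k:ℝ))) := by
        rw [Real.exp_sub, Real.exp_neg, Real.div_rpow hk1 hrpos.le,
          Real.rpow_neg hrpos.le, div_eq_mul_inv, div_eq_mul_inv]
        ring
      rw [hsplit]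
      have hpow : ((k:ℝ)+1)^α ≤ ((k:ℝ)+1)^n := by
        calc ((k:ℝ)+1)^α ≤ ((k:ℝ)+1)^((n:ℝ)) :=
              Real.rpow_le_rpow_of_exponent_le (by linarith) hαn
        _ = ((k:ℝ)+1)^n := Real.rpow_natCast _ n
      have hc0 : 0 ≤ C2 * Real.exp r * r^(-α) := by positivity
      refine mul_le_mul_of_nonneg_left ?_ hc0
      exact mul_le_mul_of_nonneg_right hpow (Real.exp_pos _).le
    calc (∫⁻ ω : Metric.sphere (0 : EuclideanSpace ℝ (Fin n)) 1,
          ENNReal.ofReal (Real.exp ((inner ℝ x (ω : EuclideanSpace ℝ (Fin n)) : ℝ))) ∂σ)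
        ≤ ∫⁻ ω, ∑' k : ℕ, (A k).indicator
            (fun _ => ENNReal.ofReal (Real.exp (r - (k:ℝ)))) ω ∂σ := lintegral_mono hpt
    _ = ∑' k : ℕ, ∫⁻ ω, (A k).indicator
            (fun _ => ENNReal.ofReal (Real.exp (r - (k:ℝ)))) ω ∂σ :=
        lintegral_tsum fun k => (measurable_const.indicator (hA k)).aemeasurable
    _ = ∑' k : ℕ, ENNReal.ofReal (Real.exp (r - (k:ℝ))) * σ (A k) := by
        refine tsum_congr fun k => ?_
        rw [lintegral_indicator (hA k), lintegral_const, Measure.restrict_apply_univ]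
    _ ≤ ∑' k : ℕ, ENNReal.ofReal (Real.exp (r - (k:ℝ)))
          * ENNReal.ofReal (C2 * (((k:ℝ)+1)/r) ^ α) :=
        ENNReal.tsum_le_tsum fun k => mul_le_mul_right (hcap k) _
    _ = ∑' k : ℕ, ENNReal.ofReal (Real.exp (r - (k:ℝ)) * (C2 * (((k:ℝ)+1)/r) ^ α)) :=
        tsum_congr fun k => (ENNReal.ofReal_mul (Real.exp_pos _).le).symm
    _ ≤ ∑' k : ℕ, ENNReal.ofReal ((C2 * Real.exp r * r^(-α))
          * (((k:ℝ)+1)^n * Real.exp (-(k:ℝ)))) :=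
        ENNReal.tsum_le_tsum fun k => ENNReal.ofReal_le_ofReal (hterm k)
    _ = ENNReal.ofReal (∑' k : ℕ, (C2 * Real.exp r * r^(-α))
          * (((k:ℝ)+1)^n * Real.exp (-(k:ℝ)))) :=
        (ENNReal.ofReal_tsum_of_nonneg (fun k => by positivity)
          ((summable_aux n).mul_left _)).symm
    _ = ENNReal.ofReal ((C2 * Real.exp r * r^(-α)) * S) := by rw [tsum_mul_left, ← hSdef]
    _ ≤ ENNReal.ofReal (C * (1 + r) ^ (-α) * Real.exp r) := by
        refine ENNReal.ofReal_le_ofReal ?_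
        have h1r : (0:ℝ) < 1 + r := by linarith
        have hp1 : (0:ℝ) < (1+r)^α := Real.rpow_pos_of_pos h1r α
        have hpr : (0:ℝ) < r^α := Real.rpow_pos_of_pos hrpos α
        have hkey : C2 * S * (1+r)^α ≤ C * r^α := by
          have h2 : (1+r)^α ≤ (2:ℝ)^α * r^α := by
            rw [← Real.mul_rpow (by norm_num) hrpos.le]
            exact Real.rpow_le_rpow h1r.le (by linarith) hα0
          calc C2*S*(1+r)^α ≤ C2*S*((2:ℝ)^α*r^α) :=
                mul_le_mul_of_nonneg_left h2 (mul_nonneg hC20 hS0)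
          _ = (C2*S*(2:ℝ)^α)*r^α := by ring
          _ ≤ C*r^α := by
                have hC' : C2*S*(2:ℝ)^α ≤ C := by
                  rw [hCdef]; nlinarith [mul_nonneg hM0 h2α.le]
                exact mul_le_mul_of_nonneg_right hC' hpr.le
        have hdiv : C2*S/(r^α) ≤ C/((1+r)^α) := (div_le_div_iff₀ hpr hp1).mpr hkey
        have hmul := mul_le_mul_of_nonneg_right hdiv (Real.exp_pos r).le
        calc C2 * Real.exp r * r^(-α) * S = (C2*S/(r^α)) * Real.exp r := by
              rw [Real.rpow_neg hrpos.le]; ring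
        _ ≤ (C/((1+r)^α)) * Real.exp r := hmul
        _ = C * (1+r)^(-α) * Real.exp r := by
              rw [Real.rpow_neg h1r.le]; ring
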